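/- Consider the deterministic Adam iteration with moment updates M⁽¹⁾ᵢ₊₁ = ρ₁M⁽¹⁾ᵢ + (1−ρ₁)∇F(Θᵢ), M⁽²⁾ᵢ₊₁ = ρ₂M⁽²⁾ᵢ + (1−ρ₂)(∇F(Θᵢ))^{⊙2}, Θᵢ₊₁ = Θᵢ − θᵢ M⁽¹⁾ᵢ₊₁ ⊘ (M⁽²⁾ᵢ₊₁)^{⊙1/2}, applied to F_D(B,C) and to F_{τ(D)}(B,C) = F_D(B, C𝒯), where 𝒯 is a signed permutation matrix, with initializations B′₀ = B₀, C′₀𝒯 = C₀ and zero initial moments. Then for all i: B′ᵢ = Bᵢ, C′ᵢ𝒯 = Cᵢ, M′ᵢ^{(1,C)} = Mᵢ^{(1,C)}𝒯ᵀ, and M′ᵢ^{(2,C)} = Mᵢ^{(2,C)}|𝒯ᵀ| (assuming all entrywise divisions are well defined). -/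

import Mathlib

open Matrix

/-- Deterministic core of the Adam invariance theorem. Running Adam on `F_D`
(gradients `gB`, `gC`) and on `F_{τ(D)}(B,C) = F_D(B, C𝒯)` (gradients given by
the chain rule), with `𝒯` a signed permutation matrix, zero initial moments,
`B′₀ = B₀`, `C′₀𝒯 = C₀`, and well-defined entrywise divisions, yields for all
`i`: `B′ᵢ = Bᵢ`, `C′ᵢ𝒯 = Cᵢ`, `M′ᵢ⁽¹'ᶜ⁾ = Mᵢ⁽¹'ᶜ⁾𝒯ᵀ`, and
`M′ᵢ⁽²'ᶜ⁾ = Mᵢ⁽²'ᶜ⁾|𝒯ᵀ|`. -/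
theorem adam_conjugation {p q d : ℕ}
    (gB : (Fin p → ℝ) → Matrix (Fin q) (Fin d) ℝ → (Fin p → ℝ))
    (gC : (Fin p → ℝ) → Matrix (Fin q) (Fin d) ℝ → Matrix (Fin q) (Fin d) ℝ)
    (𝒯 : Matrix (Fin d) (Fin d) ℝ)
    (h𝒯 : ∃ (σ : Equiv.Perm (Fin d)) (ε : Fin d → ℝ),
      (∀ i, ε i = 1 ∨ ε i = -1) ∧ 𝒯 = σ.permMatrix ℝ * Matrix.diagonal ε)
    (ρ₁ ρ₂ : ℝ) (hρ₁ : 0 < ρ₁ ∧ ρ₁ < 1) (hρ₂ : 0 < ρ₂ ∧ ρ₂ < 1)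
    (θ : ℕ → ℝ)
    (B B' : ℕ → Fin p → ℝ) (C C' : ℕ → Matrix (Fin q) (Fin d) ℝ)
    (M1B M2B M1B' M2B' : ℕ → Fin p → ℝ)
    (M1C M2C M1C' M2C' : ℕ → Matrix (Fin q) (Fin d) ℝ)
    -- Adam iteration for the original objective `F_D`:
    (hM1B : ∀ i, M1B (i + 1) = ρ₁ • M1B i + (1 - ρ₁) • gB (B i) (C i))
    (hM2B : ∀ i, M2B (i + 1) = ρ₂ • M2B i + (1 - ρ₂) • fun a => (gB (B i) (C i) a) ^ 2)
    (hBu : ∀ i, B (i + 1) = fun a => B i a - θ i * (M1B (i + 1) a / Real.sqrt (M2B (i + 1) a)))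
    (hM1C : ∀ i, M1C (i + 1) = ρ₁ • M1C i + (1 - ρ₁) • gC (B i) (C i))
    (hM2C : ∀ i, M2C (i + 1)
      = ρ₂ • M2C i + (1 - ρ₂) • Matrix.of (fun a b => (gC (B i) (C i) a b) ^ 2))
    (hCu : ∀ i, C (i + 1)
      = C i - θ i • Matrix.of (fun a b => M1C (i + 1) a b / Real.sqrt (M2C (i + 1) a b)))
    -- Adam iteration for the transformed objective `F_{τ(D)}`,
    -- whose gradients are `gB (B, C𝒯)` and `gC (B, C𝒯) 𝒯ᵀ` by the chain rule:
    (hM1B' : ∀ i, M1B' (i + 1) = ρ₁ • M1B' i + (1 - ρ₁) • gB (B' i) (C' i * 𝒯))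
    (hM2B' : ∀ i, M2B' (i + 1)
      = ρ₂ • M2B' i + (1 - ρ₂) • fun a => (gB (B' i) (C' i * 𝒯) a) ^ 2)
    (hBu' : ∀ i, B' (i + 1)
      = fun a => B' i a - θ i * (M1B' (i + 1) a / Real.sqrt (M2B' (i + 1) a)))
    (hM1C' : ∀ i, M1C' (i + 1) = ρ₁ • M1C' i + (1 - ρ₁) • (gC (B' i) (C' i * 𝒯) * 𝒯ᵀ))
    (hM2C' : ∀ i, M2C' (i + 1)
      = ρ₂ • M2C' i + (1 - ρ₂) • Matrix.of (fun a b => ((gC (B' i) (C' i * 𝒯) * 𝒯ᵀ) a b) ^ 2))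
    (hCu' : ∀ i, C' (i + 1)
      = C' i - θ i • Matrix.of (fun a b => M1C' (i + 1) a b / Real.sqrt (M2C' (i + 1) a b)))
    -- initializations:
    (hB0 : B' 0 = B 0) (hC0 : C' 0 * 𝒯 = C 0)
    (hM1B0 : M1B 0 = 0) (hM2B0 : M2B 0 = 0) (hM1C0 : M1C 0 = 0) (hM2C0 : M2C 0 = 0)
    (hM1B0' : M1B' 0 = 0) (hM2B0' : M2B' 0 = 0) (hM1C0' : M1C' 0 = 0) (hM2C0' : M2C' 0 = 0)
    -- all entrywise divisions are well defined:
    (hwdB : ∀ i a, M2B (i + 1) a ≠ 0) (hwdC : ∀ i a b, M2C (i + 1) a b ≠ 0) :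
    ∀ i, B' i = B i ∧ C' i * 𝒯 = C i ∧
      M1C' i = M1C i * 𝒯ᵀ ∧ M2C' i = M2C i * 𝒯ᵀ.map (fun t => |t|) := by
  obtain ⟨σ, ε, hε, rfl⟩ := h𝒯
  set 𝒯 := σ.permMatrix ℝ * Matrix.diagonal ε with h𝒯def
  have hT : ∀ a b, 𝒯 a b = if σ a = b then ε b else 0 := by
    intro a b
    rw [h𝒯def, Matrix.mul_diagonal, Equiv.Perm.permMatrix,
      PEquiv.toMatrix_toPEquiv_apply, Pi.single_apply]
    simp only [eq_comm (a := b)]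
    split <;> simp
  have hMT : ∀ (M : Matrix (Fin q) (Fin d) ℝ) a b,
      (M * 𝒯) a b = M a (σ.symm b) * ε b := by
    intro M a b
    rw [Matrix.mul_apply]
    have h : ∀ k, M a k * 𝒯 k b = if k = σ.symm b then M a k * ε b else 0 := by
      intro k
      rw [hT]
      rcases eq_or_ne k (σ.symm b) with rfl | hk
      · simp
      · rw [if_neg hk, if_neg, mul_zero]
        exact fun hh => hk (by rw [← hh, Equiv.symm_apply_apply])
    simp only [h]
    simp
  have hMTt : ∀ (M : Matrix (Fin q) (Fin d) ℝ) a b,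
      (M * 𝒯ᵀ) a b = M a (σ b) * ε (σ b) := by
    intro M a b
    rw [Matrix.mul_apply]
    simp only [Matrix.transpose_apply]
    have h : ∀ k, M a k * 𝒯 b k = if k = σ b then M a k * ε k else 0 := by
      intro k
      rw [hT]
      rcases eq_or_ne k (σ b) with rfl | hk
      · simp
      · rw [if_neg (fun hh => hk hh.symm), if_neg hk, mul_zero]
    simp only [h]
    simp
  have hMTabs : ∀ (M : Matrix (Fin q) (Fin d) ℝ) a b,
      (M * 𝒯ᵀ.map (fun t => |t|)) a b = M a (σ b) := by
    intro M a b
    rw [Matrix.mul_apply]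
    simp only [Matrix.map_apply, Matrix.transpose_apply]
    have h : ∀ k, M a k * |𝒯 b k| = if k = σ b then M a k else 0 := by
      intro k
      rw [hT]
      rcases eq_or_ne k (σ b) with rfl | hk
      · rcases hε (σ b) with h1 | h1 <;> simp [h1]
      · rw [if_neg (fun hh => hk hh.symm), if_neg hk, abs_zero, mul_zero]
    simp only [h]
    simp
  suffices H : ∀ i, B' i = B i ∧ C' i * 𝒯 = C i ∧
      M1C' i = M1C i * 𝒯ᵀ ∧ M2C' i = M2C i * 𝒯ᵀ.map (fun t => |t|) ∧
      M1B' i = M1B i ∧ M2B' i = M2B i by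
    exact fun i => ⟨(H i).1, (H i).2.1, (H i).2.2.1, (H i).2.2.2.1⟩
  intro i
  induction i with
  | zero =>
    refine ⟨hB0, hC0, ?_, ?_, ?_, ?_⟩
    · rw [hM1C0', hM1C0, Matrix.zero_mul]
    · rw [hM2C0', hM2C0, Matrix.zero_mul]
    · rw [hM1B0', hM1B0]
    · rw [hM2B0', hM2B0]
  | succ i ih =>
    obtain ⟨hB, hC, h1, h2, hb1, hb2⟩ := ih
    have hg : gC (B' i) (C' i * 𝒯) = gC (B i) (C i) := by rw [hB, hC]
    have hgB : gB (B' i) (C' i * 𝒯) = gB (B i) (C i) := by rw [hB, hC]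
    have hb1' : M1B' (i + 1) = M1B (i + 1) := by rw [hM1B' i, hM1B i, hb1, hgB]
    have hb2' : M2B' (i + 1) = M2B (i + 1) := by
      rw [hM2B' i, hM2B i, hb2, hgB]
    have hBnew : B' (i + 1) = B (i + 1) := by
      rw [hBu' i, hBu i]
      simp only [hB, hb1', hb2']
    have h1' : M1C' (i + 1) = M1C (i + 1) * 𝒯ᵀ := by
      rw [hM1C' i, hM1C i, h1, hg, Matrix.add_mul, Matrix.smul_mul, Matrix.smul_mul]
    have h2' : M2C' (i + 1) = M2C (i + 1) * 𝒯ᵀ.map (fun t => |t|) := by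
      rw [hM2C' i, hM2C i, hg, h2, Matrix.add_mul, Matrix.smul_mul, Matrix.smul_mul]
      congr 1
      congr 1
      ext a b
      rw [Matrix.of_apply, hMTt, hMTabs, Matrix.of_apply]
      rcases hε (σ b) with h | h <;> rw [h] <;> ring
    have hCnew : C' (i + 1) * 𝒯 = C (i + 1) := by
      rw [hCu' i, hCu i, Matrix.sub_mul, hC, Matrix.smul_mul]
      congr 1
      congr 1
      ext a b
      rw [hMT, Matrix.of_apply, Matrix.of_apply]
      simp only [h1', h2']
      rw [hMTt, hMTabs, Equiv.apply_symm_apply]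
      rcases hε b with h | h <;> rw [h] <;> ring
    exact ⟨hBnew, hCnew, h1', h2', hb1', hb2'⟩
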